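/- (Explicit exceptional set for polynomial multiplicity.) Let K be a field and let f, g ∈ K[x] be nonconstant. View f(X) − g(Y) as the element P = C f − g.map C of (K[X])[Y]. Suppose P = C (C c) * (∏_{i=1}^{s} (Y − C hᵢ)) * (∏_{j=1}^{m} Fⱼ), where c ∈ K is nonzero, h₁,…,h_s ∈ K[X] are pairwise distinct, and F₁,…,F_m ∈ (K[X])[Y] are irreducible, pairwise non-associated, each of Y-degree at least 2. Then there is a finite subset Z ⊆ K such that for every x ∈ K \ Z, the set {y ∈ K : g.eval y = f.eval x} is finite of cardinality s + ∑_{j=1}^{m} (number of y ∈ K with (Fⱼ specialized at X := x).eval y = 0), where the specialization of Fⱼ at X := x is obtained by applying the evaluation homomorphism K[X] → K at x to the coefficients of Fⱼ. -/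

import Mathlib

open Polynomial

theorem bezout_aux' {R : Type*} [CommRing R] [IsDomain R] [UniqueFactorizationMonoid R]
    (P Q : R[X]) (hP : Irreducible P) (hQ : Irreducible Q)
    (hPd : 0 < P.natDegree) (hQd : 0 < Q.natDegree)
    (hne : ¬ Associated P Q) :
    ∃ (a b : R[X]) (d : R), d ≠ 0 ∧ a * P + b * Q = C d := by
  classical
  letI : StrongNormalizationMonoid R := UniqueFactorizationMonoid.normalizationMonoid
  letI := UniqueFactorizationMonoid.toNormalizedGCDMonoid R
  set L := FractionRing R
  have prim : ∀ (P : R[X]), Irreducible P → 0 < P.natDegree → P.IsPrimitive := by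
    intro P hP hPd r hr
    rcases hr with ⟨t, ht⟩
    rcases hP.isUnit_or_isUnit ht with hu | hu
    · exact isUnit_C.mp hu
    · exfalso
      have hC : (C r : R[X]) ≠ 0 := by
        intro h0; rw [ht, h0, zero_mul] at hP; exact hP.ne_zero rfl
      have ht0 : t ≠ 0 := hu.ne_zero
      have hdeg := natDegree_mul hC ht0
      rw [← ht, natDegree_C, natDegree_eq_zero_of_isUnit hu] at hdeg
      omega
  have hP' : Irreducible (P.map (algebraMap R L)) :=
    ((prim P hP hPd).irreducible_iff_irreducible_map_fraction_map).mp hP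
  have hdvd : ¬ (P.map (algebraMap R L) ∣ Q.map (algebraMap R L)) := by
    intro hd
    exact hne (hP.associated_of_dvd hQ
      ((prim P hP hPd).dvd_of_fraction_map_dvd_fraction_map hd))
  have hcop : IsCoprime (P.map (algebraMap R L)) (Q.map (algebraMap R L)) :=
    hP'.coprime_iff_not_dvd.mpr hdvd
  obtain ⟨a, b, hab⟩ := hcop
  obtain ⟨dA, hA⟩ := IsLocalization.integerNormalization_map_to_map (nonZeroDivisors R) a
  obtain ⟨dB, hB⟩ := IsLocalization.integerNormalization_map_to_map (nonZeroDivisors R) b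
  refine ⟨C (dB : R) * IsLocalization.integerNormalization (nonZeroDivisors R) a,
      C (dA : R) * IsLocalization.integerNormalization (nonZeroDivisors R) b,
      (dA : R) * (dB : R),
      mul_ne_zero (mem_nonZeroDivisors_iff_ne_zero.mp dA.2)
        (mem_nonZeroDivisors_iff_ne_zero.mp dB.2), ?_⟩
  apply Polynomial.map_injective (algebraMap R L) (IsFractionRing.injective R L)
  rw [Polynomial.map_add, Polynomial.map_mul, Polynomial.map_mul, Polynomial.map_mul,
    Polynomial.map_mul, hA, hB, Polynomial.map_C, Polynomial.map_C, Polynomial.map_C,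
    Algebra.smul_def, Algebra.smul_def, Polynomial.algebraMap_apply, Polynomial.algebraMap_apply,
    map_mul, C_mul]
  linear_combination (C (algebraMap R L (dA : R)) * C (algebraMap R L (dB : R))) * hab

theorem stmt_16 (K : Type*) [Field K] (f g : K[X])
    (hf : 0 < f.natDegree) (hg : 0 < g.natDegree)
    (c : K) (hc : c ≠ 0) (s m : ℕ)
    (h : Fin s → K[X]) (hinj : Function.Injective h)
    (F : Fin m → Polynomial K[X])
    (hFirr : ∀ j, Irreducible (F j))
    (hFassoc : ∀ j j', j ≠ j' → ¬ Associated (F j) (F j'))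
    (hFdeg : ∀ j, 2 ≤ (F j).natDegree)
    (hfact : C f - g.map C =
      C (C c) * (∏ i : Fin s, (X - C (h i))) * ∏ j : Fin m, F j) :
    ∃ Z : Set K, Z.Finite ∧ ∀ x : K, x ∉ Z →
      {y : K | g.eval y = f.eval x}.Finite ∧
      {y : K | g.eval y = f.eval x}.ncard =
        s + ∑ j : Fin m, {y : K | ((F j).map (evalRingHom x)).eval y = 0}.ncard := by
  classical
  -- degrees / nonassociatedness helpers
  have hXsubC_irr : ∀ i : Fin s, Irreducible ((X : (K[X])[X]) - C (h i)) :=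
    fun i => irreducible_X_sub_C (h i)
  have hnatdeg_assoc : ∀ (P Q : (K[X])[X]), P ≠ 0 → Associated P Q →
      P.natDegree = Q.natDegree := by
    intro P Q hP0 ⟨u, hu⟩
    have hu0 : (u : (K[X])[X]) ≠ 0 := u.ne_zero
    rw [← hu, natDegree_mul hP0 hu0, natDegree_eq_zero_of_isUnit u.isUnit, add_zero]
  -- Bezout data
  have key2 : ∀ (p : Fin s × Fin m), ∃ (a b : (K[X])[X]) (d : K[X]), d ≠ 0 ∧
      a * ((X : (K[X])[X]) - C (h p.1)) + b * (F p.2) = C d := by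
    intro p
    refine bezout_aux' _ _ (hXsubC_irr p.1) (hFirr p.2) (by simp) (by have := hFdeg p.2; omega) ?_
    intro hass
    have h1 : ((X : (K[X])[X]) - C (h p.1)).natDegree = (F p.2).natDegree :=
      hnatdeg_assoc _ _ (X_sub_C_ne_zero (h p.1)) hass
    rw [natDegree_X_sub_C] at h1
    have := hFdeg p.2; omega
  have key3 : ∀ (p : {q : Fin m × Fin m // q.1 ≠ q.2}), ∃ (a b : (K[X])[X]) (d : K[X]), d ≠ 0 ∧
      a * F p.1.1 + b * F p.1.2 = C d := by
    intro p
    exact bezout_aux' _ _ (hFirr p.1.1) (hFirr p.1.2) (by have := hFdeg p.1.1; omega)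
      (by have := hFdeg p.1.2; omega) (hFassoc _ _ p.2)
  choose a2 b2 d2 hd2 hrel2 using key2
  choose a3 b3 d3 hd3 hrel3 using key3
  -- the exceptional polynomial
  set D1 : K[X] := ∏ p : Fin s × Fin s, (if p.1 = p.2 then 1 else (h p.1 - h p.2)) with hD1
  set D2 : K[X] := ∏ p : Fin s × Fin m, d2 p with hD2
  set D3 : K[X] := ∏ p : {q : Fin m × Fin m // q.1 ≠ q.2}, d3 p with hD3
  have hD10 : D1 ≠ 0 := by
    rw [hD1]
    apply Finset.prod_ne_zero_iff.mpr
    intro p _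
    split_ifs with hp
    · exact one_ne_zero
    · exact sub_ne_zero.mpr (fun heq => hp (hinj heq))
  have hD20 : D2 ≠ 0 := Finset.prod_ne_zero_iff.mpr (fun p _ => hd2 p)
  have hD30 : D3 ≠ 0 := Finset.prod_ne_zero_iff.mpr (fun p _ => hd3 p)
  set D : K[X] := D1 * D2 * D3 with hD
  have hD0 : D ≠ 0 := mul_ne_zero (mul_ne_zero hD10 hD20) hD30
  refine ⟨{x | D.eval x = 0}, Polynomial.finite_setOf_isRoot hD0, ?_⟩
  intro x hx
  have hDx : D.eval x ≠ 0 := hx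
  have evalne : ∀ d : K[X], d ∣ D → d.eval x ≠ 0 := by
    intro d hdvd h0
    obtain ⟨t, ht⟩ := hdvd
    exact hDx (by rw [ht, eval_mul, h0, zero_mul])
  have hdvd1 : ∀ i i' : Fin s, i ≠ i' → (h i - h i') ∣ D := by
    intro i i' hne
    have : (h i - h i') = (if (i, i').1 = (i, i').2 then 1 else (h (i, i').1 - h (i, i').2)) := by
      simp [hne]
    rw [this, hD]
    exact dvd_mul_of_dvd_left (dvd_mul_of_dvd_left
      (Finset.dvd_prod_of_mem _ (Finset.mem_univ (i, i'))) _) _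
  have hdvd2 : ∀ p : Fin s × Fin m, d2 p ∣ D := by
    intro p
    exact dvd_mul_of_dvd_left (dvd_mul_of_dvd_right
      (Finset.dvd_prod_of_mem _ (Finset.mem_univ p)) _) _
  have hdvd3 : ∀ p : {q : Fin m × Fin m // q.1 ≠ q.2}, d3 p ∣ D :=
    fun p => dvd_mul_of_dvd_right (Finset.dvd_prod_of_mem _ (Finset.mem_univ p)) _
  set e : K[X] →+* K := evalRingHom x with he
  -- no common roots after specialization
  have noCommon : ∀ (P Q a b : (K[X])[X]) (d : K[X]), a * P + b * Q = C d → d.eval x ≠ 0 →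
      ∀ y : K, (P.map e).eval y = 0 → (Q.map e).eval y = 0 → False := by
    intro P Q a b d hrel hd y hPy hQy
    have h1 := congrArg (fun p : (K[X])[X] => ((p.map e).eval y)) hrel
    simp only [Polynomial.map_add, Polynomial.map_mul, eval_add, eval_mul, hPy, hQy,
      mul_zero, add_zero, Polynomial.map_C, eval_C, he, coe_evalRingHom] at h1
    exact hd (by rw [← he, hPy, hQy] at h1; simpa using h1.symm)
  -- injectivity of specialized linear roots
  have hvalinj : Function.Injective (fun i : Fin s => (h i).eval x) := by
    intro i i' heq
    by_contra hne
    exact evalne _ (hdvd1 i i' hne) (by simp only [eval_sub]; simpa [sub_eq_zero] using heq)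
  -- map the factorization
  have hcompid : e.comp (C : K →+* K[X]) = RingHom.id K := by ext a; simp [he]
  have hmap : C (f.eval x) - g =
      C c * (∏ i : Fin s, ((X : K[X]) - C ((h i).eval x))) * ∏ j : Fin m, (F j).map e := by
    have h1 := congrArg (Polynomial.map e) hfact
    simp only [Polynomial.map_sub, Polynomial.map_mul, Polynomial.map_prod, Polynomial.map_map,
      hcompid, Polynomial.map_id, Polynomial.map_C, Polynomial.map_X] at h1
    simpa [he] using h1
  have hq0 : C (f.eval x) - g ≠ 0 := by
    intro h0
    have hgC : g = C (f.eval x) := by rw [← sub_eq_zero]; linear_combination -h0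
    rw [hgC, natDegree_C] at hg; omega
  have hFj0 : ∀ j, (F j).map e ≠ 0 := by
    intro j h0
    apply hq0
    rw [hmap, Finset.prod_eq_zero (Finset.mem_univ j) h0, mul_zero]
  -- root characterization
  have hchar : ∀ y : K, g.eval y = f.eval x ↔
      ((∃ i, (h i).eval x = y) ∨ ∃ j, ((F j).map e).eval y = 0) := by
    intro y
    have h1 : g.eval y = f.eval x ↔ (C (f.eval x) - g).eval y = 0 := by
      rw [eval_sub, eval_C, sub_eq_zero, eq_comm]
    rw [h1, hmap, eval_mul, eval_mul, eval_C, eval_prod, eval_prod]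
    simp only [eval_sub, eval_X, eval_C, mul_eq_zero, hc, false_or,
      Finset.prod_eq_zero_iff, Finset.mem_univ, true_and, sub_eq_zero]
    constructor
    · rintro (⟨i, hi⟩ | ⟨j, hj⟩)
      · exact Or.inl ⟨i, hi.symm⟩
      · exact Or.inr ⟨j, hj⟩
    · rintro (⟨i, hi⟩ | ⟨j, hj⟩)
      · exact Or.inl ⟨i, hi.symm⟩
      · exact Or.inr ⟨j, hj⟩
  -- Finsets
  set A : Finset K := Finset.image (fun i : Fin s => (h i).eval x) Finset.univ with hA
  set Bj : Fin m → Finset K := fun j => ((F j).map e).roots.toFinset with hBj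
  set B : Finset K := Finset.univ.biUnion Bj with hB
  have hBjmem : ∀ j y, y ∈ Bj j ↔ ((F j).map e).eval y = 0 := by
    intro j y
    simp only [hBj]
    rw [Multiset.mem_toFinset, mem_roots (hFj0 j), IsRoot.def]
  have hSeq : {y : K | g.eval y = f.eval x} = ↑(A ∪ B) := by
    ext y
    constructor
    · intro hy
      rcases (hchar y).mp hy with ⟨i, hi⟩ | ⟨j, hj⟩
      · exact Finset.mem_coe.mpr (Finset.mem_union_left _
          (Finset.mem_image.mpr ⟨i, Finset.mem_univ i, hi⟩))
      · exact Finset.mem_coe.mpr (Finset.mem_union_right _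
          (Finset.mem_biUnion.mpr ⟨j, Finset.mem_univ j, (hBjmem j y).mpr hj⟩))
    · intro hy
      rcases Finset.mem_union.mp (Finset.mem_coe.mp hy) with hy | hy
      · obtain ⟨i, _, hi⟩ := Finset.mem_image.mp hy
        exact (hchar y).mpr (Or.inl ⟨i, hi⟩)
      · obtain ⟨j, _, hj⟩ := Finset.mem_biUnion.mp hy
        exact (hchar y).mpr (Or.inr ⟨j, (hBjmem j y).mp hj⟩)
  have hBset : ∀ j, {y : K | ((F j).map (evalRingHom x)).eval y = 0} = ↑(Bj j) := by
    intro j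
    ext y
    rw [Set.mem_setOf_eq, Finset.mem_coe, hBjmem j y, he]
  -- disjointness
  have hdisjAB : Disjoint A B := by
    rw [Finset.disjoint_left]
    intro y hyA hyB
    rw [hA, Finset.mem_image] at hyA
    obtain ⟨i, _, hi⟩ := hyA
    rw [hB, Finset.mem_biUnion] at hyB
    obtain ⟨j, _, hj⟩ := hyB
    refine noCommon _ _ _ _ _ (hrel2 (i, j)) (evalne _ (hdvd2 (i, j))) y ?_
      ((hBjmem j y).mp hj)
    simp [he, hi]
  have hdisjB : ∀ j ∈ (Finset.univ : Finset (Fin m)), ∀ j' ∈ Finset.univ, j ≠ j' →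
      Disjoint (Bj j) (Bj j') := by
    intro j _ j' _ hjj'
    rw [Finset.disjoint_left]
    intro y hy hy'
    exact noCommon _ _ _ _ _ (hrel3 ⟨(j, j'), hjj'⟩) (evalne _ (hdvd3 ⟨(j, j'), hjj'⟩)) y
      ((hBjmem j y).mp hy) ((hBjmem j' y).mp hy')
  constructor
  · rw [hSeq]; exact (A ∪ B).finite_toSet
  · rw [hSeq, Set.ncard_coe_finset, Finset.card_union_of_disjoint hdisjAB]
    congr 1
    · rw [hA, Finset.card_image_of_injective _ hvalinj, Finset.card_univ, Fintype.card_fin]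
    · rw [hB, Finset.card_biUnion hdisjB]
      exact Finset.sum_congr rfl (fun j _ => by rw [hBset j, Set.ncard_coe_finset])
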